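/- Let L be a well-filtered dcpo. The map φ : H(Q(L)) → Q(H(L)) defined by φ(𝒜) = { A ∈ H(L) : A ∩ K ≠ ∅ for all K ∈ 𝒜 } is well-defined, i.e., φ(𝒜) is a nonempty Scott compact saturated subset of the complete lattice H(L). -/

import Mathlib

universe u

/-- A subset is Scott open: an upper set inaccessible by directed suprema. -/
def ScottOpen {α : Type u} [Preorder α] (U : Set α) : Prop :=
  IsUpperSet U ∧ ∀ d : Set α, d.Nonempty → DirectedOn (· ≤ ·) d →
    ∀ a : α, IsLUB d a → a ∈ U → (d ∩ U).Nonempty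

/-- A subset is Scott closed: a lower set closed under directed suprema. -/
def ScottClosed {α : Type u} [Preorder α] (C : Set α) : Prop :=
  IsLowerSet C ∧ ∀ d : Set α, d ⊆ C → d.Nonempty → DirectedOn (· ≤ ·) d →
    ∀ a : α, IsLUB d a → a ∈ C

/-- A dcpo: every nonempty directed subset has a supremum. -/
def IsDcpo (α : Type u) [Preorder α] : Prop :=
  ∀ d : Set α, d.Nonempty → DirectedOn (· ≤ ·) d → ∃ a, IsLUB d a

/-- Compactness with respect to the Scott topology. -/
def ScottCompact {α : Type u} [Preorder α] (K : Set α) : Prop :=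
  ∀ 𝒰 : Set (Set α), (∀ U ∈ 𝒰, ScottOpen U) → K ⊆ ⋃₀ 𝒰 →
    ∃ F : Set (Set α), F ⊆ 𝒰 ∧ F.Finite ∧ K ⊆ ⋃₀ F

/-- Well-filteredness of the Scott topology of a poset. -/
def WellFiltered (α : Type u) [Preorder α] : Prop :=
  ∀ 𝒞 : Set (Set α), 𝒞.Nonempty →
    (∀ K ∈ 𝒞, ScottCompact K ∧ IsUpperSet K) →
    DirectedOn (fun A B : Set α => B ⊆ A) 𝒞 →
    ∀ U : Set α, ScottOpen U → ⋂₀ 𝒞 ⊆ U → ∃ K ∈ 𝒞, K ⊆ U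

/-- The Hoare power construction: Scott closed subsets ordered by inclusion. -/
structure HPoset (α : Type u) [Preorder α] where
  carrier : Set α
  closed' : ScottClosed carrier

instance {α : Type u} [Preorder α] : PartialOrder (HPoset α) where
  le A B := A.carrier ⊆ B.carrier
  le_refl _ := subset_rfl
  le_trans _ _ _ h h' := Set.Subset.trans h h'
  le_antisymm A B h h' := by
    cases A; cases B
    simp only [HPoset.mk.injEq]
    exact subset_antisymm h h'

/-- The Smyth power construction: nonempty Scott compact saturated subsets
ordered by reverse inclusion. -/
structure QPoset (α : Type u) [Preorder α] where
  carrier : Set α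
  nonempty' : carrier.Nonempty
  compact' : ScottCompact carrier
  upper' : IsUpperSet carrier

instance {α : Type u} [Preorder α] : PartialOrder (QPoset α) where
  le K K' := K'.carrier ⊆ K.carrier
  le_refl _ := subset_rfl
  le_trans _ _ _ h h' := Set.Subset.trans h' h
  le_antisymm K K' h h' := by
    cases K; cases K'
    simp only [QPoset.mk.injEq]
    exact subset_antisymm h' h

/-- The lattice of Scott open subsets ordered by inclusion. -/
structure OpenSet (α : Type u) [Preorder α] where
  carrier : Set α
  open' : ScottOpen carrier

instance {α : Type u} [Preorder α] : PartialOrder (OpenSet α) where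
  le A B := A.carrier ⊆ B.carrier
  le_refl _ := subset_rfl
  le_trans _ _ _ h h' := Set.Subset.trans h h'
  le_antisymm A B h h' := by
    cases A; cases B
    simp only [OpenSet.mk.injEq]
    exact subset_antisymm h h'

/-- The map φ : H(Q(L)) → Q(H(L)) on underlying subsets. -/
def phiMap {L : Type u} [Preorder L] (𝒜 : Set (QPoset L)) : Set (HPoset L) :=
  {A : HPoset L | ∀ K ∈ 𝒜, (A.carrier ∩ K.carrier).Nonempty}

/-- The map ψ : Q(H(L)) → H(Q(L)) on underlying subsets. -/
def psiMap {L : Type u} [Preorder L] (𝒦 : Set (HPoset L)) : Set (QPoset L) :=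
  {K : QPoset L | ∀ A ∈ 𝒦, (K.carrier ∩ A.carrier).Nonempty}
/- ====================  Auxiliary development  ==================== -/

section BasicLemmas

variable {α : Type u} [Preorder α]

theorem scottOpen_sUnion {T : Set (Set α)} (h : ∀ U ∈ T, ScottOpen U) :
    ScottOpen (⋃₀ T) := by
  constructor
  · intro a b hab ha
    obtain ⟨U, hU, haU⟩ := ha
    exact ⟨U, hU, (h U hU).1 hab haU⟩
  · intro d hdne hdir a hlub ha
    obtain ⟨U, hU, haU⟩ := ha
    obtain ⟨x, hxd, hxU⟩ := (h U hU).2 d hdne hdir a hlub haU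
    exact ⟨x, hxd, U, hU, hxU⟩

theorem scottClosed_sInter {T : Set (Set α)} (h : ∀ C ∈ T, ScottClosed C) :
    ScottClosed (⋂₀ T) := by
  constructor
  · intro a b hab ha
    intro C hC
    exact (h C hC).1 hab (ha C hC)
  · intro d hd hdne hdir a hlub
    intro C hC
    exact (h C hC).2 d (fun x hx => hd hx C hC) hdne hdir a hlub

theorem scottClosed_univ : ScottClosed (Set.univ : Set α) :=
  ⟨fun _ _ _ _ => Set.mem_univ _, fun _ _ _ _ a _ => Set.mem_univ a⟩

theorem scottClosed_empty : ScottClosed (∅ : Set α) :=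
  ⟨fun _ _ _ h => h, fun d hd hdne _ _ _ => by
    obtain ⟨x, hx⟩ := hdne; exact absurd (hd hx) (Set.notMem_empty x)⟩

theorem scottClosed_inter {C D : Set α} (hC : ScottClosed C) (hD : ScottClosed D) :
    ScottClosed (C ∩ D) := by
  constructor
  · intro a b hab ha
    exact ⟨hC.1 hab ha.1, hD.1 hab ha.2⟩
  · intro d hd hdne hdir a hlub
    exact ⟨hC.2 d (fun x hx => (hd hx).1) hdne hdir a hlub,
      hD.2 d (fun x hx => (hd hx).2) hdne hdir a hlub⟩

theorem scottClosed_compl {U : Set α} (h : ScottOpen U) : ScottClosed Uᶜ := by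
  constructor
  · intro a b hab ha hb
    exact ha (h.1 hab hb)
  · intro d hd hdne hdir a hlub ha
    obtain ⟨x, hxd, hxU⟩ := h.2 d hdne hdir a hlub ha
    exact (hd hxd) hxU

theorem scottOpen_compl {C : Set α} (h : ScottClosed C) : ScottOpen Cᶜ := by
  constructor
  · intro a b hab ha hb
    exact ha (h.1 hab hb)
  · intro d hdne hdir a hlub ha
    by_contra hno
    have hdC : d ⊆ C := by
      intro x hx
      by_contra hxC
      exact hno ⟨x, hx, hxC⟩
    exact ha (h.2 d hdC hdne hdir a hlub)

theorem scottClosed_Iic (x : α) : ScottClosed (Set.Iic x) := by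
  constructor
  · intro a b hab ha
    exact le_trans hab ha
  · intro d hd _ _ a hlub
    exact hlub.2 (fun y hy => hd hy)

theorem scottClosed_union {C D : Set α} (hC : ScottClosed C) (hD : ScottClosed D) :
    ScottClosed (C ∪ D) := by
  constructor
  · intro a b hab ha
    rcases ha with h | h
    · exact Or.inl (hC.1 hab h)
    · exact Or.inr (hD.1 hab h)
  · intro d hd hdne hdir a hlub
    by_cases hcof : ∀ x ∈ d, ∃ y, y ∈ d ∩ C ∧ x ≤ y
    · left
      refine hC.2 (d ∩ C) Set.inter_subset_right ?_ ?_ a ?_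
      · obtain ⟨x, hx⟩ := hdne
        obtain ⟨y, hy, _⟩ := hcof x hx
        exact ⟨y, hy⟩
      · intro p hp q hq
        obtain ⟨z, hz, hpz, hqz⟩ := hdir p hp.1 q hq.1
        obtain ⟨w, hw, hzw⟩ := hcof z hz
        exact ⟨w, hw, hpz.trans hzw, hqz.trans hzw⟩
      · constructor
        · intro p hp
          exact hlub.1 hp.1
        · intro c hc
          refine hlub.2 ?_
          intro p hp
          obtain ⟨y, hy, hpy⟩ := hcof p hp
          exact hpy.trans (hc hy)
    · push_neg at hcof
      obtain ⟨x₀, hx₀, hx₀'⟩ := hcof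
      right
      have hsub : {y | y ∈ d ∧ x₀ ≤ y} ⊆ D := by
        intro y hy
        rcases hd hy.1 with h | h
        · exact absurd hy.2 (hx₀' y ⟨hy.1, h⟩)
        · exact h
      refine hD.2 {y | y ∈ d ∧ x₀ ≤ y} hsub ⟨x₀, hx₀, le_refl x₀⟩ ?_ a ?_
      · intro p hp q hq
        obtain ⟨z, hz, hpz, hqz⟩ := hdir p hp.1 q hq.1
        obtain ⟨w, hw, hzw, hx₀w⟩ := hdir z hz x₀ hx₀
        exact ⟨w, ⟨hw, hx₀w⟩, hpz.trans hzw, hqz.trans hzw⟩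
      · constructor
        · intro p hp
          exact hlub.1 hp.1
        · intro c hc
          refine hlub.2 ?_
          intro p hp
          obtain ⟨w, hw, hpw, hx₀w⟩ := hdir p hp x₀ hx₀
          exact hpw.trans (hc ⟨hw, hx₀w⟩)

/-- Scott closure. -/
def scl (S : Set α) : Set α := ⋂₀ {C | ScottClosed C ∧ S ⊆ C}

theorem scottClosed_scl (S : Set α) : ScottClosed (scl S) :=
  scottClosed_sInter (fun _ hC => hC.1)

theorem subset_scl (S : Set α) : S ⊆ scl S :=
  fun _ hx => Set.mem_sInter.2 (fun _ hC => hC.2 hx)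

theorem scl_subset {S C : Set α} (hC : ScottClosed C) (h : S ⊆ C) : scl S ⊆ C :=
  fun _ hx => (Set.mem_sInter.1 hx) C ⟨hC, h⟩

end BasicLemmas

theorem directedOn_exists_ub_finite {β : Type u} {r : β → β → Prop}
    (htrans : ∀ a b c : β, r a b → r b c → r a c)
    {s : Set β} (hdir : DirectedOn r s) (hne : s.Nonempty)
    {t : Set β} (ht : t.Finite) (hts : t ⊆ s) :
    ∃ z ∈ s, ∀ x ∈ t, r x z := by
  refine Set.Finite.induction_on
    (motive := fun u _ => u ⊆ s → ∃ z ∈ s, ∀ x ∈ u, r x z) _ ht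
    (fun _ => ⟨hne.choose, hne.choose_spec,
      fun x hx => absurd hx (Set.notMem_empty x)⟩) ?_ hts
  intro a u hau hu ih haus
  have has : a ∈ s := haus (Set.mem_insert a u)
  obtain ⟨z, hz, hzall⟩ := ih (fun x hx => haus (Set.mem_insert_of_mem a hx))
  obtain ⟨w, hw, haw, hzw⟩ := hdir a has z hz
  refine ⟨w, hw, ?_⟩
  intro x hx
  rcases Set.mem_insert_iff.1 hx with rfl | hx
  · exact haw
  · exact htrans _ _ _ (hzall x hx) hzw

theorem finite_subset_image_of_surj {β γ : Type u} {F : Set γ} (hF : F.Finite)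
    {s : Set β} {f : β → γ} (h : ∀ W ∈ F, ∃ D ∈ s, W = f D) :
    ∃ t, t ⊆ s ∧ t.Finite ∧ F ⊆ f '' t := by
  refine Set.Finite.induction_on
    (motive := fun u _ => (∀ W ∈ u, ∃ D ∈ s, W = f D) → ∃ t, t ⊆ s ∧ t.Finite ∧ u ⊆ f '' t) _ hF
    (fun _ => ⟨∅, Set.empty_subset s, Set.finite_empty, by simp⟩) ?_ h
  intro a u hau hu ih hall
  obtain ⟨t, hts, htf, hut⟩ := ih (fun W hW => hall W (Set.mem_insert_of_mem a hW))
  obtain ⟨D, hD, rfl⟩ := hall a (Set.mem_insert a u)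
  refine ⟨insert D t, Set.insert_subset hD hts, htf.insert D, ?_⟩
  intro W hW
  rcases Set.mem_insert_iff.1 hW with rfl | hW
  · exact ⟨D, Set.mem_insert D t, rfl⟩
  · obtain ⟨D', hD', rfl⟩ := hut hW
    exact ⟨D', Set.mem_insert_of_mem _ hD', rfl⟩

section HLemmas

variable {L : Type u} [PartialOrder L]

theorem HPoset.ext' {A B : HPoset L} (h : A.carrier = B.carrier) : A = B := by
  cases A; cases B; simpa using h

/-- Binary join in `H(L)`: union of Scott closed sets. -/
def HJoin (A B : HPoset L) : HPoset L :=
  ⟨A.carrier ∪ B.carrier, scottClosed_union A.closed' B.closed'⟩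

/-- Principal ideal as an element of `H(L)`. -/
def HIic (x : L) : HPoset L := ⟨Set.Iic x, scottClosed_Iic x⟩

theorem HJoin_comm (A B : HPoset L) : HJoin A B = HJoin B A :=
  HPoset.ext' (Set.union_comm _ _)

theorem isLUB_HJoin_image {A : HPoset L} {d : Set (HPoset L)} {b : HPoset L}
    (hlub : IsLUB d b) (hdne : d.Nonempty) :
    IsLUB ((fun x => HJoin A x) '' d) (HJoin A b) := by
  constructor
  · rintro _ ⟨x, hx, rfl⟩
    exact Set.union_subset_union_right _ (hlub.1 hx)
  · intro c hc
    show A.carrier ∪ b.carrier ⊆ c.carrier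
    have hbc : b ≤ c := hlub.2 (fun x hx =>
      Set.Subset.trans (Set.subset_union_right) (hc ⟨x, hx, rfl⟩))
    obtain ⟨x₀, hx₀⟩ := hdne
    have hAc : A.carrier ⊆ c.carrier :=
      Set.Subset.trans (Set.subset_union_left) (hc ⟨x₀, hx₀, rfl⟩)
    exact Set.union_subset hAc hbc

theorem directedOn_HJoin_image {A : HPoset L} {d : Set (HPoset L)}
    (hdir : DirectedOn (· ≤ ·) d) :
    DirectedOn (· ≤ ·) ((fun x => HJoin A x) '' d) := by
  rintro _ ⟨x, hx, rfl⟩ _ ⟨y, hy, rfl⟩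
  obtain ⟨z, hz, hxz, hyz⟩ := hdir x hx y hy
  exact ⟨HJoin A z, ⟨z, hz, rfl⟩, Set.union_subset_union_right _ hxz,
    Set.union_subset_union_right _ hyz⟩

theorem scottClosed_joinPre {M : Set (HPoset L)} (hM : ScottClosed M) (b : HPoset L) :
    ScottClosed {x : HPoset L | HJoin b x ∈ M} := by
  constructor
  · intro x x' hx'x hx
    exact hM.1 (Set.union_subset_union_right _ hx'x) hx
  · intro d hd hdne hdir xh hlub
    have himg : (fun x => HJoin b x) '' d ⊆ M := by
      rintro _ ⟨x, hx, rfl⟩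
      exact hd hx
    exact hM.2 _ himg (hdne.image _) (directedOn_HJoin_image hdir) _
      (isLUB_HJoin_image hlub hdne)

theorem scottOpen_joinIic {𝒲 : Set (HPoset L)} (h𝒲 : ScottOpen 𝒲) (B : HPoset L) :
    ScottOpen {x : L | HJoin B (HIic x) ∈ 𝒲} := by
  constructor
  · intro x y hxy hx
    exact h𝒲.1 (Set.union_subset_union_right _ (Set.Iic_subset_Iic.2 hxy)) hx
  · intro d hdne hdir a hlub ha
    have hSne : ((fun x => HJoin B (HIic x)) '' d).Nonempty := hdne.image _
    have hSdir : DirectedOn (· ≤ ·) ((fun x => HJoin B (HIic x)) '' d) := by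
      rintro _ ⟨x, hx, rfl⟩ _ ⟨y, hy, rfl⟩
      obtain ⟨z, hz, hxz, hyz⟩ := hdir x hx y hy
      exact ⟨HJoin B (HIic z), ⟨z, hz, rfl⟩,
        Set.union_subset_union_right _ (Set.Iic_subset_Iic.2 hxz),
        Set.union_subset_union_right _ (Set.Iic_subset_Iic.2 hyz)⟩
    have hSlub : IsLUB ((fun x => HJoin B (HIic x)) '' d) (HJoin B (HIic a)) := by
      constructor
      · rintro _ ⟨x, hx, rfl⟩
        exact Set.union_subset_union_right _ (Set.Iic_subset_Iic.2 (hlub.1 hx))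
      · intro c hc
        show B.carrier ∪ Set.Iic a ⊆ c.carrier
        have hd_sub : d ⊆ c.carrier := by
          intro x hx
          exact (hc ⟨x, hx, rfl⟩) (Or.inr (le_refl x))
        have haC : a ∈ c.carrier := c.closed'.2 d hd_sub hdne hdir a hlub
        intro y hy
        rcases hy with hy | hy
        · obtain ⟨x₀, hx₀⟩ := hdne
          exact (hc ⟨x₀, hx₀, rfl⟩) (Or.inl hy)
        · exact c.closed'.1 hy haC
    obtain ⟨_, ⟨x, hxd, rfl⟩, hxW⟩ := h𝒲.2 _ hSne hSdir _ hSlub ha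
    exact ⟨x, hxd, hxW⟩

end HLemmas
section Ssets

variable {L : Type u} [PartialOrder L]

/-- The set of Scott closed sets containing `B` and meeting each member of `Ks`. -/
def Ssets (B : Set L) (Ks : List (QPoset L)) : Set (HPoset L) :=
  {A | B ⊆ A.carrier ∧ ∀ K ∈ Ks, (A.carrier ∩ K.carrier).Nonempty}

theorem Ssets_upper (B : Set L) (Ks : List (QPoset L)) : IsUpperSet (Ssets B Ks) := by
  intro A A' hAA' hA
  exact ⟨Set.Subset.trans hA.1 hAA', fun K hK =>
    Set.Nonempty.mono (Set.inter_subset_inter_left _ hAA') (hA.2 K hK)⟩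

theorem mem_Ssets_cons {B : Set L} {K : QPoset L} {Ks : List (QPoset L)} {A : HPoset L} :
    A ∈ Ssets B (K :: Ks) ↔ ∃ x ∈ K.carrier, A ∈ Ssets (B ∪ Set.Iic x) Ks := by
  constructor
  · rintro ⟨hB, hall⟩
    obtain ⟨x, hxA, hxK⟩ := hall K (List.mem_cons_self)
    exact ⟨x, hxK, Set.union_subset hB (fun y hy => A.closed'.1 hy hxA),
      fun K' hK' => hall K' (List.mem_cons_of_mem _ hK')⟩
  · rintro ⟨x, hxK, hB, hall⟩
    refine ⟨Set.Subset.trans Set.subset_union_left hB, ?_⟩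
    intro K' hK'
    rcases List.mem_cons.1 hK' with rfl | hK'
    · exact ⟨x, hB (Or.inr (le_refl x)), hxK⟩
    · exact hall K' hK'

theorem scottOpen_SsetsPre (Ks : List (QPoset L)) {O : Set (HPoset L)} (hO : ScottOpen O) :
    ScottOpen {B : HPoset L | Ssets B.carrier Ks ⊆ O} := by
  induction Ks with
  | nil =>
    constructor
    · intro B B' hBB' hB A hA
      exact hB ⟨Set.Subset.trans hBB' hA.1, hA.2⟩
    · intro d hdne hdir B' hlub hB'
      have hB'O : B' ∈ O := hB' ⟨subset_rfl, fun K hK => absurd hK List.not_mem_nil⟩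
      obtain ⟨D, hDd, hDO⟩ := hO.2 d hdne hdir B' hlub hB'O
      refine ⟨D, hDd, ?_⟩
      intro A hA
      exact hO.1 hA.1 hDO
  | cons K Ks ih =>
    have h𝒲 : ScottOpen {C : HPoset L | Ssets C.carrier Ks ⊆ O} := ih
    have hmemT : ∀ C : HPoset L, Ssets C.carrier (K :: Ks) ⊆ O ↔
        ∀ x ∈ K.carrier, HJoin C (HIic x) ∈ {C : HPoset L | Ssets C.carrier Ks ⊆ O} := by
      intro C
      constructor
      · intro h x hx A hA
        exact h (mem_Ssets_cons.2 ⟨x, hx, hA⟩)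
      · intro h A hA
        obtain ⟨x, hx, hA'⟩ := mem_Ssets_cons.1 hA
        exact h x hx hA'
    constructor
    · intro B B' hBB' hB A hA
      exact hB ⟨Set.Subset.trans hBB' hA.1, hA.2⟩
    · intro 𝒟 hne hdir Bh hlub hBh
      have hcover : K.carrier ⊆
          ⋃₀ {W | ∃ D ∈ 𝒟, W = {x : L | HJoin D (HIic x) ∈ {C : HPoset L | Ssets C.carrier Ks ⊆ O}}} := by
        intro x hx
        have hBhx : HJoin (HIic x) Bh ∈ {C : HPoset L | Ssets C.carrier Ks ⊆ O} := by
          rw [HJoin_comm]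
          exact (hmemT Bh).1 hBh x hx
        obtain ⟨_, ⟨D, hD, rfl⟩, hW⟩ := h𝒲.2 _ (hne.image _)
          (directedOn_HJoin_image hdir) _ (isLUB_HJoin_image hlub hne) hBhx
        refine ⟨_, ⟨D, hD, rfl⟩, ?_⟩
        show HJoin D (HIic x) ∈ {C : HPoset L | Ssets C.carrier Ks ⊆ O}
        rw [HJoin_comm]
        exact hW
      obtain ⟨F, hF𝒱, hFfin, hKF⟩ := K.compact' _
        (by rintro W ⟨D, hD, rfl⟩; exact scottOpen_joinIic h𝒲 D) hcover
      obtain ⟨t, hts, htf, hFt⟩ := finite_subset_image_of_surj hFfin (fun W hW => hF𝒱 hW)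
      rcases Set.eq_empty_or_nonempty t with rfl | htne
      · exfalso
        obtain ⟨x, hx⟩ := K.nonempty'
        obtain ⟨W, hWF, _⟩ := hKF hx
        obtain ⟨D, hDt, _⟩ := hFt hWF
        exact absurd hDt (Set.notMem_empty D)
      obtain ⟨Dstar, hDstar, hub⟩ := directedOn_exists_ub_finite
        (r := fun A B : HPoset L => A ≤ B)
        (fun _ _ _ hab hbc => le_trans hab hbc) hdir hne htf hts
      refine ⟨Dstar, hDstar, (hmemT Dstar).2 ?_⟩
      intro x hx
      obtain ⟨W, hWF, hxW⟩ := hKF hx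
      obtain ⟨D, hDt, rfl⟩ := hFt hWF
      exact h𝒲.1 (Set.union_subset_union_left _ (hub D hDt)) hxW

theorem scottCompact_Ssets (Ks : List (QPoset L)) :
    ∀ B : HPoset L, ScottCompact (Ssets B.carrier Ks) := by
  induction Ks with
  | nil =>
    intro B 𝒰 h𝒰 hcov
    obtain ⟨U, hU, hBU⟩ := hcov
      (show B ∈ Ssets B.carrier [] from ⟨subset_rfl, fun K hK => absurd hK List.not_mem_nil⟩)
    refine ⟨{U}, Set.singleton_subset_iff.2 hU, Set.finite_singleton U, ?_⟩
    intro A hA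
    exact ⟨U, Set.mem_singleton U, (h𝒰 U hU).1 hA.1 hBU⟩
  | cons K Ks ih =>
    intro B 𝒰 h𝒰 hcov
    have hVopen : ∀ F, F ⊆ 𝒰 →
        ScottOpen {x : L | Ssets (B.carrier ∪ Set.Iic x) Ks ⊆ ⋃₀ F} := by
      intro F hF
      have hOF : ScottOpen (⋃₀ F) := scottOpen_sUnion (fun U hU => h𝒰 U (hF hU))
      exact scottOpen_joinIic (scottOpen_SsetsPre Ks hOF) B
    have hcover : K.carrier ⊆ ⋃₀ {W | ∃ F, (F ⊆ 𝒰 ∧ F.Finite) ∧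
        W = {x : L | Ssets (B.carrier ∪ Set.Iic x) Ks ⊆ ⋃₀ F}} := by
      intro x hx
      have hsub : Ssets (B.carrier ∪ Set.Iic x) Ks ⊆ ⋃₀ 𝒰 :=
        fun A hA => hcov (mem_Ssets_cons.2 ⟨x, hx, hA⟩)
      obtain ⟨F, hF, hFfin, hFsub⟩ := ih (HJoin B (HIic x)) 𝒰 h𝒰 hsub
      exact ⟨_, ⟨F, ⟨hF, hFfin⟩, rfl⟩, hFsub⟩
    obtain ⟨𝒱, h𝒱sub, h𝒱fin, hK𝒱⟩ := K.compact' _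
      (by rintro W ⟨F, ⟨hF, _⟩, rfl⟩; exact hVopen F hF) hcover
    obtain ⟨t, hts, htf, h𝒱t⟩ := finite_subset_image_of_surj h𝒱fin (fun W hW => h𝒱sub hW)
    refine ⟨⋃₀ t, ?_, ?_, ?_⟩
    · intro U hU
      obtain ⟨F, hFt, hUF⟩ := hU
      exact (hts hFt).1 hUF
    · exact Set.Finite.sUnion htf (fun F hF => (hts hF).2)
    · intro A hA
      obtain ⟨x, hxK, hA'⟩ := mem_Ssets_cons.1 hA
      obtain ⟨W, hW𝒱, hxW⟩ := hK𝒱 hxK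
      obtain ⟨F, hFt, rfl⟩ := h𝒱t hW𝒱
      obtain ⟨U, hUF, hAU⟩ := hxW hA'
      exact ⟨U, ⟨F, hFt, hUF⟩, hAU⟩

end Ssets
/-- Xi–Lawson: the complete lattice `H(L)` is well-filtered in its Scott topology. -/
theorem wellFiltered_HPoset (L : Type u) [PartialOrder L] : WellFiltered (HPoset L) := by
  intro 𝒞 h𝒞ne hK hdir U hU hsub
  by_contra hcon
  push_neg at hcon
  have hmeet : ∀ Q ∈ 𝒞, (Uᶜ ∩ Q).Nonempty := by
    intro Q hQ
    obtain ⟨z, hzQ, hzU⟩ := Set.not_subset.1 (hcon Q hQ)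
    exact ⟨z, hzU, hzQ⟩
  set 𝒮 : Set (Set (HPoset L)) :=
    {M | ScottClosed M ∧ M ⊆ Uᶜ ∧ ∀ Q ∈ 𝒞, (M ∩ Q).Nonempty} with h𝒮
  have hUc𝒮 : Uᶜ ∈ 𝒮 := ⟨scottClosed_compl hU, subset_rfl,
    fun Q hQ => hmeet Q hQ⟩
  have hchain : ∀ c ⊆ 𝒮, IsChain (· ⊆ ·) c → c.Nonempty →
      ∃ lb ∈ 𝒮, ∀ s ∈ c, lb ⊆ s := by
    intro c hc𝒮 hch hcne
    refine ⟨⋂₀ c, ⟨scottClosed_sInter (fun C hC => (hc𝒮 hC).1), ?_, ?_⟩,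
      fun s hs => Set.sInter_subset_of_mem hs⟩
    · obtain ⟨M₀, hM₀⟩ := hcne
      exact Set.Subset.trans (Set.sInter_subset_of_mem hM₀) (hc𝒮 hM₀).2.1
    · intro Q hQ
      by_contra hempty
      rw [Set.not_nonempty_iff_eq_empty] at hempty
      have hQcov : Q ⊆ ⋃₀ {W | ∃ M ∈ c, W = Mᶜ} := by
        intro q hq
        by_contra hq'
        have hqint : q ∈ ⋂₀ c := by
          intro M hM
          by_contra hqM
          exact hq' ⟨Mᶜ, ⟨M, hM, rfl⟩, hqM⟩
        have : q ∈ (∅ : Set (HPoset L)) := hempty ▸ (⟨hqint, hq⟩ : q ∈ ⋂₀ c ∩ Q)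
        exact this
      obtain ⟨F, hFsub, hFfin, hQF⟩ := (hK Q hQ).1 _
        (by rintro W ⟨M, hM, rfl⟩; exact scottOpen_compl (hc𝒮 hM).1) hQcov
      obtain ⟨t, htc, htfin, hFt⟩ := finite_subset_image_of_surj hFfin (fun W hW => hFsub hW)
      have hdirc : DirectedOn (fun A B : Set (HPoset L) => B ⊆ A) c := by
        intro x hx y hy
        by_cases hxy : x = y
        · exact ⟨x, hx, subset_rfl, hxy ▸ subset_rfl⟩
        rcases hch hx hy hxy with h | h
        · exact ⟨x, hx, subset_rfl, h⟩
        · exact ⟨y, hy, h, subset_rfl⟩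
      obtain ⟨z, hzc, hzlb⟩ := directedOn_exists_ub_finite
        (r := fun A B : Set (HPoset L) => B ⊆ A)
        (fun _ _ _ hab hbc => Set.Subset.trans hbc hab) hdirc hcne htfin htc
      obtain ⟨q, hqz, hqQ⟩ := (hc𝒮 hzc).2.2 Q hQ
      obtain ⟨W, hWF, hqW⟩ := hQF hqQ
      obtain ⟨M, hMt, rfl⟩ := hFt hWF
      exact hqW (hzlb M hMt hqz)
  obtain ⟨M, _, hMmin⟩ := zorn_superset_nonempty 𝒮 hchain Uᶜ hUc𝒮
  obtain ⟨hMcl, hMU, hMmeet⟩ := hMmin.1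
  have hmin : ∀ N ∈ 𝒮, N ⊆ M → N = M :=
    fun N hN hNM => subset_antisymm hNM (hMmin.2 hN hNM)
  have hMne : M.Nonempty := by
    obtain ⟨Q, hQ⟩ := h𝒞ne
    exact Set.Nonempty.mono Set.inter_subset_left (hMmeet Q hQ)
  have hscl : ∀ Q ∈ 𝒞, M = scl (M ∩ Q) := by
    intro Q hQ
    have h1 : scl (M ∩ Q) ⊆ M := scl_subset hMcl Set.inter_subset_left
    have h2 : scl (M ∩ Q) ∈ 𝒮 := by
      refine ⟨scottClosed_scl _, Set.Subset.trans h1 hMU, ?_⟩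
      intro Q' hQ'
      obtain ⟨Q'', hQ'', hsub1, hsub2⟩ := hdir Q hQ Q' hQ'
      obtain ⟨m, hm⟩ := hMmeet Q'' hQ''
      exact ⟨m, subset_scl _ ⟨hm.1, hsub1 hm.2⟩, hsub2 hm.2⟩
    exact (hmin _ h2 h1).symm
  have hjoin : ∀ Q ∈ 𝒞, ∀ a ∈ M, ∃ x, x ∈ M ∩ Q ∧ HJoin a x ∈ M := by
    intro Q hQ
    have hAclosed : ScottClosed {b : HPoset L | ∃ x, x ∈ M ∩ Q ∧ HJoin b x ∈ M} := by
      constructor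
      · rintro b b' hb'b ⟨x, hx, hbx⟩
        exact ⟨x, hx, hMcl.1 (Set.union_subset_union_left _ hb'b) hbx⟩
      · intro d hdA hdne hddir bh hlub
        have hEanti : ∀ {b b' : HPoset L}, b ≤ b' →
            {x : HPoset L | HJoin b' x ∈ M} ⊆ {x : HPoset L | HJoin b x ∈ M} := by
          intro b b' hbb' x hx
          exact hMcl.1 (Set.union_subset_union_left _ hbb') hx
        have hxstar : ∃ x, x ∈ M ∩ Q ∧ ∀ b ∈ d, HJoin b x ∈ M := by
          by_contra hno
          push_neg at hno
          have hQcov : Q ⊆ ⋃₀ {W | ∃ b ∈ d, W = (M ∩ {x : HPoset L | HJoin b x ∈ M})ᶜ} := by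
            intro q hq
            by_cases hqM : q ∈ M
            · obtain ⟨b, hb, hqE⟩ := hno q ⟨hqM, hq⟩
              exact ⟨_, ⟨b, hb, rfl⟩, fun hc => hqE hc.2⟩
            · obtain ⟨b₀, hb₀⟩ := hdne
              exact ⟨_, ⟨b₀, hb₀, rfl⟩, fun hc => hqM hc.1⟩
          obtain ⟨F, hFsub, hFfin, hQF⟩ := (hK Q hQ).1 _
            (by
              rintro W ⟨b, hb, rfl⟩
              exact scottOpen_compl (scottClosed_inter hMcl (scottClosed_joinPre hMcl b))) hQcov
          obtain ⟨t, htd, htfin, hFt⟩ := finite_subset_image_of_surj hFfin (fun W hW => hFsub hW)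
          rcases Set.eq_empty_or_nonempty t with rfl | htne
          · obtain ⟨q, hqM, hqQ⟩ := hMmeet Q hQ
            obtain ⟨W, hWF, _⟩ := hQF hqQ
            obtain ⟨b, hbt, _⟩ := hFt hWF
            exact absurd hbt (Set.notMem_empty b)
          obtain ⟨bstar, hbstar, hub⟩ := directedOn_exists_ub_finite
            (r := fun A B : HPoset L => A ≤ B)
            (fun _ _ _ hab hbc => le_trans hab hbc) hddir hdne htfin htd
          obtain ⟨x, hxMQ, hbx⟩ := hdA hbstar
          obtain ⟨W, hWF, hxW⟩ := hQF hxMQ.2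
          obtain ⟨b, hbt, rfl⟩ := hFt hWF
          exact hxW ⟨hxMQ.1, hEanti (hub b hbt) hbx⟩
        obtain ⟨x, hxMQ, hxE⟩ := hxstar
        have himg : (fun b => HJoin x b) '' d ⊆ M := by
          rintro _ ⟨b, hb, rfl⟩
          show HJoin x b ∈ M
          rw [HJoin_comm]
          exact hxE b hb
        have hjx : HJoin x bh ∈ M := hMcl.2 _ himg (hdne.image _)
          (directedOn_HJoin_image hddir) _ (isLUB_HJoin_image hlub hdne)
        refine ⟨x, hxMQ, ?_⟩
        rw [HJoin_comm]
        exact hjx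
    have hMQA : M ∩ Q ⊆ {b : HPoset L | ∃ x, x ∈ M ∩ Q ∧ HJoin b x ∈ M} := by
      intro x hx
      refine ⟨x, hx, ?_⟩
      have hxx : HJoin x x = x := HPoset.ext' (Set.union_self _)
      rw [hxx]
      exact hx.1
    intro a ha
    have heq := hscl Q hQ
    have ha' : a ∈ scl (M ∩ Q) := heq ▸ ha
    exact scl_subset hAclosed hMQA ha' 
  have hjoinM : ∀ a ∈ M, ∀ b ∈ M, HJoin a b ∈ M := by
    intro a ha b hb
    have hNcl : ScottClosed (M ∩ {x : HPoset L | HJoin a x ∈ M}) :=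
      scottClosed_inter hMcl (scottClosed_joinPre hMcl a)
    have hN𝒮 : M ∩ {x : HPoset L | HJoin a x ∈ M} ∈ 𝒮 := by
      refine ⟨hNcl, Set.Subset.trans Set.inter_subset_left hMU, ?_⟩
      intro Q hQ
      obtain ⟨x, hxMQ, hjoin'⟩ := hjoin Q hQ a ha
      exact ⟨x, ⟨hxMQ.1, hjoin'⟩, hxMQ.2⟩
    have hNM : M ∩ {x : HPoset L | HJoin a x ∈ M} = M :=
      hmin _ hN𝒮 Set.inter_subset_left
    have hbN : b ∈ M ∩ {x : HPoset L | HJoin a x ∈ M} := by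
      rw [hNM]
      exact hb
    exact hbN.2
  have hMdir : DirectedOn (· ≤ ·) M := by
    intro a ha b hb
    exact ⟨HJoin a b, hjoinM a ha b hb, Set.subset_union_left, Set.subset_union_right⟩
  have hslub : IsLUB M (⟨scl (⋃ A ∈ M, HPoset.carrier A), scottClosed_scl _⟩ : HPoset L) := by
    constructor
    · intro A hA
      exact Set.Subset.trans (Set.subset_biUnion_of_mem hA) (subset_scl _)
    · intro c hc
      show scl (⋃ A ∈ M, HPoset.carrier A) ⊆ c.carrier
      refine scl_subset c.closed' ?_
      exact Set.iUnion₂_subset (fun A hA => hc hA)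
  have hsM : (⟨scl (⋃ A ∈ M, HPoset.carrier A), scottClosed_scl _⟩ : HPoset L) ∈ M :=
    hMcl.2 M subset_rfl hMne hMdir _ hslub
  have hsU : (⟨scl (⋃ A ∈ M, HPoset.carrier A), scottClosed_scl _⟩ : HPoset L) ∈ U := by
    apply hsub
    intro Q hQ
    obtain ⟨x, hxM, hxQ⟩ := hMmeet Q hQ
    exact (hK Q hQ).2 (hslub.1 hxM) hxQ
  exact (hMU hsM) hsU
theorem phi_well_defined {L : Type u} [PartialOrder L] (hd : IsDcpo L)
    (hw : WellFiltered L) (𝒜 : Set (QPoset L)) (h𝒜 : ScottClosed 𝒜) :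
    (phiMap 𝒜).Nonempty ∧ ScottCompact (phiMap 𝒜) ∧ IsUpperSet (phiMap 𝒜) := by
  classical
  refine ⟨⟨⟨Set.univ, scottClosed_univ⟩, ?_⟩, ?_, ?_⟩
  · intro K hK
    obtain ⟨x, hx⟩ := K.nonempty'
    exact ⟨x, Set.mem_univ x, hx⟩
  · intro 𝒰 h𝒰 hcov
    set 𝒞 : Set (Set (HPoset L)) :=
      {S | ∃ Ks : List (QPoset L), (∀ K ∈ Ks, K ∈ 𝒜) ∧ S = Ssets (∅ : Set L) Ks} with h𝒞
    have hmem : ∀ S ∈ 𝒞, ScottCompact S ∧ IsUpperSet S := by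
      rintro S ⟨Ks, hKs, rfl⟩
      exact ⟨scottCompact_Ssets Ks ⟨∅, scottClosed_empty⟩, Ssets_upper _ _⟩
    have h𝒞ne : 𝒞.Nonempty :=
      ⟨Ssets (∅ : Set L) [], ⟨[], fun K hK => absurd hK List.not_mem_nil, rfl⟩⟩
    have h𝒞dir : DirectedOn (fun A B : Set (HPoset L) => B ⊆ A) 𝒞 := by
      rintro S₁ ⟨Ks₁, hKs₁, rfl⟩ S₂ ⟨Ks₂, hKs₂, rfl⟩
      refine ⟨Ssets (∅ : Set L) (Ks₁ ++ Ks₂), ⟨Ks₁ ++ Ks₂, ?_, rfl⟩, ?_, ?_⟩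
      · intro K hK
        rcases List.mem_append.1 hK with h | h
        exacts [hKs₁ K h, hKs₂ K h]
      · intro A hA
        exact ⟨hA.1, fun K hK => hA.2 K (List.mem_append_left _ hK)⟩
      · intro A hA
        exact ⟨hA.1, fun K hK => hA.2 K (List.mem_append_right _ hK)⟩
    have hInt : ⋂₀ 𝒞 ⊆ ⋃₀ 𝒰 := by
      intro A hA
      apply hcov
      intro K hK
      have hmemS : A ∈ Ssets (∅ : Set L) [K] := hA _
        ⟨[K], fun K' hK' => by
          rcases List.mem_cons.1 hK' with rfl | h
          · exact hK
          · exact absurd h List.not_mem_nil, rfl⟩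
      exact hmemS.2 K (List.mem_cons_self)
    obtain ⟨S, hS𝒞, hSU⟩ := wellFiltered_HPoset L 𝒞 h𝒞ne hmem h𝒞dir (⋃₀ 𝒰)
      (scottOpen_sUnion (fun U hU => h𝒰 U hU)) hInt
    obtain ⟨Ks, hKs, rfl⟩ := hS𝒞
    obtain ⟨F, hF, hFfin, hsub⟩ :=
      scottCompact_Ssets Ks (⟨∅, scottClosed_empty⟩ : HPoset L) 𝒰 h𝒰 hSU
    refine ⟨F, hF, hFfin, ?_⟩
    intro A hA
    apply hsub
    exact ⟨Set.empty_subset _, fun K hK => hA K (hKs K hK)⟩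
  · intro A B hAB hA K hK
    exact Set.Nonempty.mono (Set.inter_subset_inter_left _ hAB) (hA K hK)
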